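/- Let G ∈ 𝒢_{m1,m2} with m1 ≤ M_2/M and m2 ≤ M_2²/M². Let b_ℓ(G,∅) denote the number of simple ordered 2-paths (u,v,w) of G such that there is no loop at v. Then M_2·(1 − (8·m2·Δ + m1·Δ²)/M_2) ≤ b_ℓ(G,∅) ≤ M_2, i.e. M_2 − 8·m2·Δ − m1·Δ² ≤ b_ℓ(G,∅) ≤ M_2. -/

import Mathlib

open Finset

private lemma nat_quad (s t Δ : ℕ) (h : s + 2*t ≤ Δ) :
    (s + 2*t) * (s + 2*t - 1) ≤ s * (s - 1) + 4*t*Δ := by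
  rcases s with _ | s'
  · simp only [Nat.zero_add, Nat.zero_mul, Nat.zero_add] at *
    calc 2*t*(2*t-1) ≤ 2*t*Δ := Nat.mul_le_mul_left _ (by omega)
    _ ≤ 4*t*Δ := Nat.mul_le_mul_right _ (by omega)
  · have h4 : 4*t*(s'+1+2*t) ≤ 4*t*Δ := Nat.mul_le_mul_left _ h
    have e1 : s' + 1 + 2*t - 1 = s' + 2*t := by omega
    have e2 : s' + 1 - 1 = s' := by omega
    rw [e1, e2]
    nlinarith

private lemma nat_sq (k : ℕ) : k * k - k = k * (k - 1) := by
  cases k with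
  | zero => simp
  | succ m =>
    have h : (m+1) * (m+1) = (m+1) * m + (m+1) := by ring
    simp only [Nat.add_sub_cancel]
    omega

theorem bl_empty_bounds (n : ℕ) (d : Fin n → ℕ) (mG : Fin n → Fin n → ℕ)
    (M M2 Δ m1 m2 : ℕ)
    (hM : M = ∑ i, d i)
    (hM2 : M2 = ∑ i, d i * (d i - 1))
    (hΔ : Δ = Finset.univ.sup d)
    (hsymm : ∀ u v, mG u v = mG v u)
    (hdeg : ∀ v, (∑ u ∈ Finset.univ.filter (fun u => u ≠ v), mG v u)
        + 2 * mG v v = d v)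
    (hloop : ∀ v, mG v v ≤ 1)
    (hmul : ∀ u v, u ≠ v → mG u v ≤ 2)
    (hm1 : m1 = ∑ v, mG v v)
    (hm2 : 2 * m2 = Set.ncard {q : Fin n × Fin n | q.1 ≠ q.2 ∧ mG q.1 q.2 = 2})
    (hm1le : (m1 : ℝ) ≤ (M2 : ℝ) / M)
    (hm2le : (m2 : ℝ) ≤ (M2 : ℝ) ^ 2 / (M : ℝ) ^ 2)
    (bl0 : ℕ)
    (hbl0 : bl0 = Set.ncard {t : Fin n × Fin n × Fin n |
      t.1 ≠ t.2.1 ∧ t.1 ≠ t.2.2 ∧ t.2.1 ≠ t.2.2 ∧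
      mG t.1 t.2.1 = 1 ∧ mG t.2.1 t.2.2 = 1 ∧ mG t.2.1 t.2.1 = 0}) :
    (M2 : ℝ) - 8 * m2 * Δ - m1 * Δ ^ 2 ≤ (bl0 : ℝ) ∧ bl0 ≤ M2 := by
  classical
  set s : Fin n → ℕ := fun v => (univ.filter (fun u => u ≠ v ∧ mG v u = 1)).card with hsdef
  set t : Fin n → ℕ := fun v => (univ.filter (fun u => u ≠ v ∧ mG v u = 2)).card with htdef
  -- degree decomposition
  have keysum : ∀ v, (∑ u ∈ univ.filter (fun u => u ≠ v), mG v u) = s v + 2 * t v := by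
    intro v
    have hpt : ∀ u ∈ univ.filter (fun u => u ≠ v), mG v u
        = (if mG v u = 1 then 1 else 0) + 2 * (if mG v u = 2 then 1 else 0) := by
      intro u hu
      simp only [mem_filter, mem_univ, true_and] at hu
      have h2 := hmul v u (fun h => hu h.symm)
      interval_cases (mG v u) <;> simp
    rw [Finset.sum_congr rfl hpt, Finset.sum_add_distrib, ← Finset.mul_sum,
      ← Finset.card_filter, ← Finset.card_filter, Finset.filter_filter, Finset.filter_filter]
  have hds : ∀ v, d v = s v + 2 * t v + 2 * mG v v := by
    intro v
    have := hdeg v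
    rw [keysum v] at this
    omega
  have hdΔ : ∀ v, d v ≤ Δ := fun v => hΔ ▸ Finset.le_sup (mem_univ v)
  -- bl0 as a sum over centers
  have hbl' : bl0 = ∑ v, (if mG v v = 0 then s v * (s v - 1) else 0) := by
    have hset : {t : Fin n × Fin n × Fin n |
        t.1 ≠ t.2.1 ∧ t.1 ≠ t.2.2 ∧ t.2.1 ≠ t.2.2 ∧
        mG t.1 t.2.1 = 1 ∧ mG t.2.1 t.2.2 = 1 ∧ mG t.2.1 t.2.1 = 0}
        = ↑(univ.filter (fun t0 : Fin n × Fin n × Fin n =>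
          t0.1 ≠ t0.2.1 ∧ t0.1 ≠ t0.2.2 ∧ t0.2.1 ≠ t0.2.2 ∧
          mG t0.1 t0.2.1 = 1 ∧ mG t0.2.1 t0.2.2 = 1 ∧ mG t0.2.1 t0.2.1 = 0)) := by
      ext x; simp
    rw [hbl0, hset, Set.ncard_coe_finset,
      Finset.card_eq_sum_card_fiberwise (f := fun t0 => t0.2.1) (t := univ)
        (fun x _ => mem_univ _)]
    refine Finset.sum_congr rfl fun v _ => ?_
    by_cases hv : mG v v = 0
    · rw [if_pos hv]
      have hcard : ((univ.filter (fun u => u ≠ v ∧ mG v u = 1)).offDiag).card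
          = s v * (s v - 1) := by
        rw [Finset.offDiag_card]
        exact nat_sq _
      rw [← hcard]
      apply Finset.card_nbij' (fun t0 => (t0.1, t0.2.2)) (fun p => (p.1, v, p.2))
      · rintro ⟨a, b, c⟩ hmem
        simp only [Finset.mem_coe, Finset.mem_filter, Finset.mem_univ, true_and] at hmem
        obtain ⟨⟨h1, h2, h3, h4, h5, h6⟩, rfl⟩ := hmem
        simp only [Finset.mem_coe, Finset.mem_offDiag, Finset.mem_filter, Finset.mem_univ, true_and]
        exact ⟨⟨h1, by rw [hsymm]; exact h4⟩, ⟨Ne.symm h3, h5⟩, h2⟩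
      · rintro ⟨a, c⟩ hmem
        simp only [Finset.mem_coe, Finset.mem_offDiag, Finset.mem_filter, Finset.mem_univ, true_and] at hmem
        obtain ⟨⟨ha, ha1⟩, ⟨hc, hc1⟩, hac⟩ := hmem
        simp only [Finset.mem_coe, Finset.mem_filter, Finset.mem_univ, true_and]
        exact ⟨⟨ha, hac, fun h => hc h.symm, by rw [hsymm]; exact ha1, hc1, hv⟩, trivial⟩
      · rintro ⟨a, b, c⟩ hmem
        simp only [Finset.mem_coe, Finset.mem_filter, Finset.mem_univ, true_and] at hmem
        obtain ⟨-, rfl⟩ := hmem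
        rfl
      · rintro ⟨a, c⟩ _
        rfl
    · rw [if_neg hv, Finset.card_eq_zero, Finset.eq_empty_iff_forall_notMem]
      rintro ⟨a, b, c⟩ hmem
      simp only [Finset.mem_filter, Finset.mem_univ, true_and] at hmem
      obtain ⟨⟨-, -, -, -, -, h6⟩, rfl⟩ := hmem
      exact hv h6
  -- double edges fiberwise
  have hm2' : 2 * m2 = ∑ v, t v := by
    have hset : {q : Fin n × Fin n | q.1 ≠ q.2 ∧ mG q.1 q.2 = 2}
        = ↑(univ.filter (fun q : Fin n × Fin n => q.1 ≠ q.2 ∧ mG q.1 q.2 = 2)) := by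
      ext x; simp
    rw [hm2, hset, Set.ncard_coe_finset,
      Finset.card_eq_sum_card_fiberwise (f := fun q => q.1) (t := univ)
        (fun x _ => mem_univ _)]
    refine Finset.sum_congr rfl fun v _ => ?_
    apply Finset.card_nbij' (fun q => q.2) (fun u => (v, u))
    · rintro ⟨a, b⟩ hmem
      simp only [Finset.mem_coe, Finset.mem_filter, Finset.mem_univ, true_and] at hmem
      obtain ⟨⟨h1, h2⟩, rfl⟩ := hmem
      simp only [Finset.mem_coe, Finset.mem_filter, Finset.mem_univ, true_and]
      exact ⟨fun h => h1 h.symm, h2⟩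
    · intro u hu
      simp only [Finset.mem_coe, Finset.mem_filter, Finset.mem_univ, true_and] at hu
      simp only [Finset.mem_coe, Finset.mem_filter, Finset.mem_univ, true_and]
      exact ⟨⟨fun h => hu.1 h.symm, hu.2⟩, trivial⟩
    · rintro ⟨a, b⟩ hmem
      simp only [Finset.mem_coe, Finset.mem_filter, Finset.mem_univ, true_and] at hmem
      obtain ⟨-, rfl⟩ := hmem
      rfl
    · intro u _
      rfl
  -- upper bound
  have upper : bl0 ≤ M2 := by
    rw [hbl', hM2]
    apply Finset.sum_le_sum
    intro v _
    by_cases hv : mG v v = 0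
    · rw [if_pos hv]
      have hsd : s v ≤ d v := by have := hds v; omega
      exact Nat.mul_le_mul hsd (Nat.sub_le_sub_right hsd 1)
    · rw [if_neg hv]; exact Nat.zero_le _
  -- lower bound
  have lower : M2 ≤ bl0 + 8 * m2 * Δ + m1 * Δ ^ 2 := by
    have h2 : ∑ v, (4 * t v * Δ) = 8 * m2 * Δ := by
      rw [← Finset.sum_mul, ← Finset.mul_sum, ← hm2']; ring
    have h1 : ∑ v : Fin n, mG v v * Δ ^ 2 = m1 * Δ ^ 2 := by
      rw [← Finset.sum_mul, ← hm1]
    rw [hM2, hbl', ← h2, ← h1, ← Finset.sum_add_distrib, ← Finset.sum_add_distrib]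
    apply Finset.sum_le_sum
    intro v _
    by_cases hv : mG v v = 0
    · rw [if_pos hv]
      have hd : d v = s v + 2 * t v := by have := hds v; omega
      have hq := nat_quad (s v) (t v) Δ (by rw [← hd]; exact hdΔ v)
      rw [hd, hv]
      simpa using hq
    · have hv1 : mG v v = 1 := by have := hloop v; omega
      rw [if_neg hv, hv1]
      have hle : d v * (d v - 1) ≤ Δ * Δ :=
        Nat.mul_le_mul (hdΔ v) (le_trans (Nat.sub_le _ _) (hdΔ v))
      have : Δ * Δ = 1 * Δ ^ 2 := by ring
      omega
  refine ⟨?_, upper⟩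
  have hcast : (M2 : ℝ) ≤ (bl0 : ℝ) + 8 * m2 * Δ + m1 * Δ ^ 2 := by
    exact_mod_cast lower
  linarith
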